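/- Let v : ℝ^N → ℝ be a bounded Borel function with v ≤ 0 on ℝ^N∖Ω, Γ its concave envelope on Ω_{Λε+τε²}, and K_v its contact set. Then B_M ⊂ ∇Γ(K_v), i.e. for every vector η with |η| < M there is a point x ∈ K_v with η in the superdifferential ∇Γ(x), where M = sup_Ω v⁺ / (diam Ω + Λε + τε²). -/
import Mathlib


open MeasureTheory Metric Filter Set Function
open scoped Topology Classical RealInnerProductSpace symmDiff ENNReal

noncomputable section

def extDom {N : ℕ} (Ω : Set (EuclideanSpace ℝ (Fin N))) (lam t ε : ℝ) :
    Set (EuclideanSpace ℝ (Fin N)) :=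
  {x | Metric.infDist x Ω < lam * ε + t * ε ^ 2}

def envelope {N : ℕ} (Ω : Set (EuclideanSpace ℝ (Fin N))) (lam t ε : ℝ)
    (v : EuclideanSpace ℝ (Fin N) → ℝ) (x : EuclideanSpace ℝ (Fin N)) : ℝ :=
  if x ∈ extDom Ω lam t ε then
    sInf {w : ℝ | ∃ (a : ℝ) (ξ : EuclideanSpace ℝ (Fin N)),
      (∀ y ∈ extDom Ω lam t ε, max (v y) (sSup (v '' Ωᶜ)) ≤ a + ⟪ξ, y⟫) ∧
      w = a + ⟪ξ, x⟫}
  else sSup (v '' Ωᶜ)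

def superdiff {N : ℕ} (Ω : Set (EuclideanSpace ℝ (Fin N))) (lam t ε : ℝ)
    (Γ : EuclideanSpace ℝ (Fin N) → ℝ) (x : EuclideanSpace ℝ (Fin N)) :
    Set (EuclideanSpace ℝ (Fin N)) :=
  {ξ | ∀ z ∈ extDom Ω lam t ε, Γ z ≤ Γ x + ⟪ξ, z - x⟫}

def contactSet {N : ℕ} (Ω : Set (EuclideanSpace ℝ (Fin N))) (lam t ε : ℝ)
    (v : EuclideanSpace ℝ (Fin N) → ℝ) : Set (EuclideanSpace ℝ (Fin N)) :=
  {x ∈ closure Ω |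
    Filter.limsup (fun y => max (v y) (sSup (v '' Ωᶜ))) (𝓝 x) = envelope Ω lam t ε v x}

/-- Lemma 4.5: the superdifferential of the concave envelope on the contact set
covers the ball of radius `M = sup_Ω v⁺ / (diam Ω + Λε + τε²)`. -/
theorem superdifferential_covers_ball
    (N : ℕ) (Λ τ ε : ℝ) (hΛ : 1 ≤ Λ) (hτ : 1 ≤ τ) (hε : 0 < ε)
    (Ω : Set (EuclideanSpace ℝ (Fin N))) (hΩo : IsOpen Ω) (hΩb : Bornology.IsBounded Ω)
    (hΩne : Ω.Nonempty)
    (v : EuclideanSpace ℝ (Fin N) → ℝ) (hv : Measurable v) (hb : ∃ M, ∀ x, |v x| ≤ M)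
    (hneg : ∀ x ∉ Ω, v x ≤ 0) :
    ∀ η : EuclideanSpace ℝ (Fin N),
      ‖η‖ < sSup ((fun x => max (v x) 0) '' Ω) / (Metric.diam Ω + Λ * ε + τ * ε ^ 2) →
      ∃ x ∈ contactSet Ω Λ τ ε v, η ∈ superdiff Ω Λ τ ε (envelope Ω Λ τ ε v) x := by

  obtain ⟨Mv, hMv⟩ := hb
  have hMv0 : 0 ≤ Mv := le_trans (abs_nonneg _) (hMv 0)
  intro η hη
  have hr : 0 < Λ * ε + τ * ε ^ 2 := by nlinarith [pow_pos hε 2]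
  set r : ℝ := Λ * ε + τ * ε ^ 2 with hrdef
  set sh : ℝ := sSup (v '' Ωᶜ) with hshdef
  set vh : EuclideanSpace ℝ (Fin N) → ℝ := fun y => max (v y) sh with hvhdef
  have hsh0 : sh ≤ 0 := Real.sSup_nonpos (by rintro x ⟨z, hz, rfl⟩; exact hneg z hz)
  have hvhle : ∀ y, vh y ≤ Mv := fun y => max_le ((abs_le.1 (hMv y)).2) (hsh0.trans hMv0)
  have hvhge : ∀ y, -Mv ≤ vh y := fun y => ((abs_le.1 (hMv y)).1).trans (le_max_left _ _)
  have hvhneg : ∀ y, y ∉ Ω → vh y ≤ 0 := fun y hy => max_le (hneg y hy) hsh0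
  set D : Set (EuclideanSpace ℝ (Fin N)) := extDom Ω Λ τ ε with hDdef
  have hmemD : ∀ x : EuclideanSpace ℝ (Fin N), x ∈ D ↔ Metric.infDist x Ω < r := fun x => Iff.rfl
  have hDopen : IsOpen D := by
    have h : D = (fun x : EuclideanSpace ℝ (Fin N) => Metric.infDist x Ω) ⁻¹' (Set.Iio r) := rfl
    rw [h]
    exact isOpen_Iio.preimage (Metric.continuous_infDist_pt Ω)
  have hΩD : Ω ⊆ D := fun x hx => by
    rw [hmemD, Metric.infDist_zero_of_mem hx]; exact hr
  have hclΩD : closure Ω ⊆ D := fun x hx => by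
    rw [hmemD, Metric.infDist_zero_of_mem_closure hx]; exact hr
  obtain ⟨R, hR⟩ := hΩb.subset_closedBall 0
  have hDball : ∀ x ∈ D, ‖x‖ ≤ R + r := by
    intro x hx
    obtain ⟨z, hz, hdz⟩ := (Metric.infDist_lt_iff hΩne).1 ((hmemD x).1 hx)
    have h1 : dist z (0 : EuclideanSpace ℝ (Fin N)) ≤ R := Metric.mem_closedBall.1 (hR hz)
    calc ‖x‖ = dist x 0 := (dist_zero_right x).symm
    _ ≤ dist x z + dist z 0 := dist_triangle _ _ _
    _ ≤ r + R := add_le_add hdz.le h1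
    _ = R + r := add_comm _ _
  set K := closure D with hKdef
  have hKcpt : IsCompact K := by
    refine (isCompact_closedBall (0 : EuclideanSpace ℝ (Fin N)) (R + r)).of_isClosed_subset
      isClosed_closure ?_
    refine closure_minimal (fun x hx => ?_) Metric.isClosed_closedBall
    exact Metric.mem_closedBall.2 (by rw [dist_zero_right]; exact hDball x hx)
  have hKr : ∀ x ∈ K, Metric.infDist x Ω ≤ r := by
    intro x hx
    have h : K ⊆ {y : EuclideanSpace ℝ (Fin N) | Metric.infDist y Ω ≤ r} :=
      closure_minimal (fun y hy => le_of_lt ((hmemD y).1 hy))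
        (isClosed_le (Metric.continuous_infDist_pt Ω) continuous_const)
    exact h hx
  have hBdd : ∀ x : EuclideanSpace ℝ (Fin N), Filter.IsBoundedUnder (· ≤ ·) (𝓝 x) vh :=
    fun x => Filter.isBoundedUnder_of ⟨Mv, hvhle⟩
  have hCob : ∀ x : EuclideanSpace ℝ (Fin N), Filter.IsCoboundedUnder (· ≤ ·) (𝓝 x) vh :=
    fun x => Filter.IsBoundedUnder.isCoboundedUnder_le
      (Filter.isBoundedUnder_of ⟨-Mv, fun y => hvhge y⟩)
  set g : EuclideanSpace ℝ (Fin N) → ℝ := fun x => Filter.limsup vh (𝓝 x) with hgdef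
  set cS : Set ℝ := (fun y => vh y - ⟪η, y⟫) '' D with hcSdef
  obtain ⟨y0, hy0⟩ := id hΩne
  have hcne : cS.Nonempty := ⟨_, ⟨y0, hΩD hy0, rfl⟩⟩
  have hcbdd : BddAbove cS := by
    refine ⟨Mv + ‖η‖ * (R + r), ?_⟩
    rintro w ⟨y, hy, rfl⟩
    have h1 : -⟪η, y⟫ ≤ ‖η‖ * ‖y‖ := (neg_le_abs _).trans (abs_real_inner_le_norm η y)
    have h2 : ‖η‖ * ‖y‖ ≤ ‖η‖ * (R + r) :=
      mul_le_mul_of_nonneg_left (hDball y hy) (norm_nonneg _)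
    have h3 := hvhle y
    simp only
    linarith
  set c : ℝ := sSup cS with hcdef
  have hadm : ∀ y ∈ D, vh y ≤ c + ⟪η, y⟫ := by
    intro y hy
    have h := le_csSup hcbdd ⟨y, hy, rfl⟩
    simp only at h
    linarith
  have key : ∀ x ∈ D, ∀ (a : ℝ) (ξ : EuclideanSpace ℝ (Fin N)),
      (∀ y ∈ D, vh y ≤ a + ⟪ξ, y⟫) → g x ≤ a + ⟪ξ, x⟫ := by
    intro x hx a ξ hA
    by_contra hcon
    push_neg at hcon
    set δ : ℝ := (g x - (a + ⟪ξ, x⟫)) / 2 with hδdef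
    have hδ : 0 < δ := by simp only [hδdef]; linarith
    have hU : ∀ᶠ y in 𝓝 x, vh y ≤ a + ⟪ξ, x⟫ + δ := by
      have h1 : ∀ᶠ y in 𝓝 x, y ∈ D := hDopen.mem_nhds hx
      have h2 : ∀ᶠ y in 𝓝 x, ⟪ξ, y⟫ < ⟪ξ, x⟫ + δ := by
        have hcont : Continuous fun y : EuclideanSpace ℝ (Fin N) => ⟪ξ, y⟫ :=
          continuous_const.inner continuous_id
        have hop : IsOpen {y : EuclideanSpace ℝ (Fin N) | ⟪ξ, y⟫ < ⟪ξ, x⟫ + δ} :=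
          isOpen_lt hcont continuous_const
        exact hop.mem_nhds (by simp only [Set.mem_setOf_eq]; linarith)
      filter_upwards [h1, h2] with y hyD hylt
      have := hA y hyD
      linarith
    have hle : g x ≤ a + ⟪ξ, x⟫ + δ := Filter.limsup_le_of_le (hCob x) hU
    simp only [hδdef] at hle
    linarith
  -- select a maximizing sequence and a convergent subsequence
  have hseq : ∀ n : ℕ, ∃ y, y ∈ D ∧ c - 1 / ((n : ℝ) + 1) < vh y - ⟪η, y⟫ := by
    intro n
    have hpos : (0 : ℝ) < 1 / ((n : ℝ) + 1) := by positivity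
    obtain ⟨w, hwmem, hw⟩ := exists_lt_of_lt_csSup hcne (by linarith : c - 1 / ((n : ℝ) + 1) < c)
    obtain ⟨y, hy, rfl⟩ := hwmem
    exact ⟨y, hy, hw⟩
  choose yseq hyD hylt using hseq
  obtain ⟨x₀, hx₀K, φ, hφ, hconv⟩ := hKcpt.tendsto_subseq fun n => subset_closure (hyD n)
  -- the limsup at x₀ is at least c + ⟪η, x₀⟫
  have hglb : c + ⟪η, x₀⟫ ≤ g x₀ := by
    by_contra hcon
    push_neg at hcon
    set b : ℝ := (g x₀ + (c + ⟪η, x₀⟫)) / 2 with hbdef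
    have hb1 : g x₀ < b := by simp only [hbdef]; linarith
    have hb2 : b < c + ⟪η, x₀⟫ := by simp only [hbdef]; linarith
    have t1 : Filter.Tendsto (fun k => ⟪η, (yseq ∘ φ) k⟫) Filter.atTop (𝓝 ⟪η, x₀⟫) :=
      ((continuous_const.inner continuous_id).tendsto x₀).comp hconv
    have t2 : Filter.Tendsto (fun k => 1 / ((φ k : ℝ) + 1)) Filter.atTop (𝓝 0) :=
      tendsto_one_div_add_atTop_nhds_zero_nat.comp hφ.tendsto_atTop
    have t3 : Filter.Tendsto (fun k => c - 1 / ((φ k : ℝ) + 1) + ⟪η, yseq (φ k)⟫)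
        Filter.atTop (𝓝 (c + ⟪η, x₀⟫)) := by
      have := (tendsto_const_nhds (x := c) (f := Filter.atTop (α := ℕ))).sub t2 |>.add t1
      simpa using this
    have hev : ∀ᶠ k in Filter.atTop, b ≤ vh (yseq (φ k)) := by
      filter_upwards [t3.eventually_const_lt hb2] with k hk
      have := hylt (φ k)
      linarith
    have hfreq : ∃ᶠ y in 𝓝 x₀, b ≤ vh y := hconv.frequently hev.frequently
    have : b ≤ g x₀ := Filter.le_limsup_of_frequently_le hfreq (hBdd x₀)
    linarith
  -- quantitative facts from the bound on ‖η‖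
  set S : ℝ := sSup ((fun x => max (v x) 0) '' Ω) with hSdef
  have hdΩ : 0 ≤ Metric.diam Ω := Metric.diam_nonneg
  have hdenom : 0 < Metric.diam Ω + Λ * ε + τ * ε ^ 2 := by linarith [hr]
  have hM : ‖η‖ * (Metric.diam Ω + r) < S := by
    have h := (lt_div_iff₀ hdenom).1 hη
    have he : ‖η‖ * (Metric.diam Ω + r) = ‖η‖ * (Metric.diam Ω + Λ * ε + τ * ε ^ 2) := by
      rw [hrdef]; ring
    rw [he]; exact h
  have hMnn : 0 ≤ ‖η‖ * (Metric.diam Ω + r) := by positivity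
  set δ : ℝ := (S - ‖η‖ * (Metric.diam Ω + r)) / 2 with hδdef
  have hgap : 0 < S - ‖η‖ * (Metric.diam Ω + r) := by linarith
  have hδpos : 0 < δ := by rw [hδdef]; exact half_pos hgap
  have hSδ : ‖η‖ * (Metric.diam Ω + r) < S - δ := by simp only [hδdef]; linarith
  have hSδ0 : 0 < S - δ := lt_of_le_of_lt hMnn hSδ
  have hSne : ((fun x => max (v x) 0) '' Ω).Nonempty := ⟨_, ⟨y0, hy0, rfl⟩⟩
  obtain ⟨w, hwmem, hw⟩ := exists_lt_of_lt_csSup hSne (by linarith : S - δ < S)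
  obtain ⟨ys, hysΩ, rfl⟩ := hwmem
  have hvys : S - δ < v ys := by
    have hw' : S - δ < max (v ys) 0 := hw
    by_contra h
    push_neg at h
    have hmax : max (v ys) 0 ≤ S - δ := max_le h hSδ0.le
    linarith
  have hcys : S - δ - ⟪η, ys⟫ < c := by
    have h := le_csSup hcbdd ⟨ys, hΩD hysΩ, rfl⟩
    simp only at h
    have h2 : v ys ≤ vh ys := le_max_left _ _
    linarith
  -- x₀ lies in the closure of Ω
  have hx₀Ω : x₀ ∈ closure Ω := by
    by_contra hx
    have hUc : (closure Ω)ᶜ ∈ 𝓝 x₀ := isClosed_closure.isOpen_compl.mem_nhds hx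
    have hev : ∀ᶠ y in 𝓝 x₀, vh y ≤ 0 := by
      filter_upwards [hUc] with y hy
      exact hvhneg y fun h => hy (subset_closure h)
    have hg0 : g x₀ ≤ 0 := Filter.limsup_le_of_le (hCob x₀) hev
    have hdist : dist ys x₀ ≤ Metric.diam Ω + r := by
      by_contra h'
      push_neg at h'
      set δ' : ℝ := dist ys x₀ - (Metric.diam Ω + r) with hδ'def
      have hδ' : 0 < δ' := by simp only [hδ'def]; linarith
      obtain ⟨z, hz, hdz⟩ := (Metric.infDist_lt_iff hΩne).1
        (lt_of_le_of_lt (hKr x₀ hx₀K) (by linarith : r < r + δ'))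
      have hdyz : dist ys z ≤ Metric.diam Ω := Metric.dist_le_diam_of_mem hΩb hysΩ hz
      have htri : dist ys x₀ ≤ dist ys z + dist z x₀ := dist_triangle _ _ _
      rw [dist_comm z x₀] at htri
      simp only [hδ'def] at hδ' hdz
      linarith
    have hinner : ⟪η, ys⟫ - ⟪η, x₀⟫ ≤ ‖η‖ * (Metric.diam Ω + r) := by
      calc ⟪η, ys⟫ - ⟪η, x₀⟫ = ⟪η, ys - x₀⟫ := (inner_sub_right _ _ _).symm
      _ ≤ ‖η‖ * ‖ys - x₀‖ := real_inner_le_norm _ _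
      _ = ‖η‖ * dist ys x₀ := by rw [dist_eq_norm]
      _ ≤ ‖η‖ * (Metric.diam Ω + r) := mul_le_mul_of_nonneg_left hdist (norm_nonneg _)
    linarith
  have hx₀D : x₀ ∈ D := hclΩD hx₀Ω
  -- envelope facts
  have hEnv : ∀ x ∈ D, envelope Ω Λ τ ε v x =
      sInf {w : ℝ | ∃ (a : ℝ) (ξ : EuclideanSpace ℝ (Fin N)),
        (∀ y ∈ extDom Ω Λ τ ε, max (v y) (sSup (v '' Ωᶜ)) ≤ a + ⟪ξ, y⟫) ∧
        w = a + ⟪ξ, x⟫} := by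
    intro x hx
    rw [envelope, if_pos (show x ∈ extDom Ω Λ τ ε from hx)]
  have hmemA : ∀ x : EuclideanSpace ℝ (Fin N),
      (c + ⟪η, x⟫) ∈ {w : ℝ | ∃ (a : ℝ) (ξ : EuclideanSpace ℝ (Fin N)),
        (∀ y ∈ extDom Ω Λ τ ε, max (v y) (sSup (v '' Ωᶜ)) ≤ a + ⟪ξ, y⟫) ∧
        w = a + ⟪ξ, x⟫} :=
    fun x => ⟨c, η, fun y hy => hadm y hy, rfl⟩
  have hlbA : ∀ x ∈ D, ∀ w ∈ {w : ℝ | ∃ (a : ℝ) (ξ : EuclideanSpace ℝ (Fin N)),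
      (∀ y ∈ extDom Ω Λ τ ε, max (v y) (sSup (v '' Ωᶜ)) ≤ a + ⟪ξ, y⟫) ∧
      w = a + ⟪ξ, x⟫}, g x ≤ w := by
    rintro x hx w ⟨a, ξ, hA, rfl⟩
    exact key x hx a ξ fun y hy => hA y hy
  have hEnvle : ∀ x ∈ D, envelope Ω Λ τ ε v x ≤ c + ⟪η, x⟫ := by
    intro x hx
    rw [hEnv x hx]
    exact csInf_le ⟨g x, hlbA x hx⟩ (hmemA x)
  have hEnvge : g x₀ ≤ envelope Ω Λ τ ε v x₀ := by
    rw [hEnv x₀ hx₀D]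
    exact le_csInf ⟨_, hmemA x₀⟩ (hlbA x₀ hx₀D)
  have hEnvx₀ : envelope Ω Λ τ ε v x₀ = c + ⟪η, x₀⟫ :=
    le_antisymm (hEnvle x₀ hx₀D) (le_trans hglb hEnvge)
  have hgx₀ : g x₀ = envelope Ω Λ τ ε v x₀ :=
    le_antisymm hEnvge ((hEnvle x₀ hx₀D).trans hglb)
  refine ⟨x₀, ⟨hx₀Ω, ?_⟩, ?_⟩
  · exact hgx₀
  · intro z hz
    have h1 : envelope Ω Λ τ ε v z ≤ c + ⟪η, z⟫ := hEnvle z hz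
    have h2 : ⟪η, z - x₀⟫ = ⟪η, z⟫ - ⟪η, x₀⟫ := inner_sub_right _ _ _
    rw [hEnvx₀, h2]
    linarith
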